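/- Let n ≥ 4 and r > 0. Let R ∈ SL(2,ℝ) be the rotation matrix with entries R₁₁ = cos(π/n), R₁₂ = sin(π/n), R₂₁ = −sin(π/n), R₂₂ = cos(π/n), let p = e^r·i ∈ ℍ², and define x_k = R^k·p (action by fractional linear transformations) for 0 ≤ k ≤ n. Then x_n = x₀, τ(x₀,x₁,…,xₙ) = (n−1)·d(x₀,x₂) − (n−2)·d(x₀,x₁), and τ(x₀,…,xₙ) ≥ d(x₀,x₂). -/

import Mathlib

open UpperHalfPlane Real Filter

/-- The tension of the chain `x 0, x 1, …, x n`: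
`τ = Σ_{j=1}^{n−1} d(x_{j−1},x_{j+1}) − Σ_{j=2}^{n−1} d(x_{j−1},x_j) − d(x_0,x_n)`. -/
noncomputable def tension (n : ℕ) (x : ℕ → UpperHalfPlane) : ℝ :=
  (∑ j ∈ Finset.range (n - 1), dist (x j) (x (j + 2)))
    - (∑ j ∈ Finset.range (n - 2), dist (x (j + 1)) (x (j + 2)))
    - dist (x 0) (x n)

/-- The Gromov product `⟨x,y⟩_z = (d(x,z)+d(z,y)−d(x,y))/2`. -/
noncomputable def gromov (x y z : UpperHalfPlane) : ℝ :=
  (dist x z + dist z y - dist x y) / 2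

/-- A pair `(a,b)` is good if `a, b ≥ 0` and `sinh(a−b) > 2·sinh(a/2)`. -/
def GoodPair (a b : ℝ) : Prop :=
  0 ≤ a ∧ 0 ≤ b ∧ Real.sinh (a - b) > 2 * Real.sinh (a / 2)

/-- The chain `x 0, …, x n` is `(a,b)`-good. -/
def GoodChain (a b : ℝ) (n : ℕ) (x : ℕ → UpperHalfPlane) : Prop :=
  (∀ j < n, dist (x (j + 1)) (x j) ≥ a) ∧
  (∀ j, 1 ≤ j → j + 1 ≤ n → gromov (x (j - 1)) (x (j + 1)) (x j) ≤ b)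

lemma rot_pow (θ : ℝ) (R : Matrix.SpecialLinearGroup (Fin 2) ℝ)
    (hR : (R : Matrix (Fin 2) (Fin 2) ℝ) = !![Real.cos θ, Real.sin θ; -Real.sin θ, Real.cos θ])
    (k : ℕ) :
    ((R ^ k : Matrix.SpecialLinearGroup (Fin 2) ℝ) : Matrix (Fin 2) (Fin 2) ℝ)
      = !![Real.cos (k * θ), Real.sin (k * θ); -Real.sin (k * θ), Real.cos (k * θ)] := by
  induction k with
  | zero => simp [Matrix.one_fin_two]
  | succ k ih =>
    rw [pow_succ, Matrix.SpecialLinearGroup.coe_mul, ih, hR, Matrix.mul_fin_two]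
    push_cast
    rw [add_mul, one_mul]
    ext i j
    fin_cases i <;> fin_cases j <;>
      simp [Real.cos_add, Real.sin_add] <;> ring

lemma neg_one_smul_H (z : UpperHalfPlane) :
    ((-1 : Matrix.SpecialLinearGroup (Fin 2) ℝ) • z) = z := by
  apply UpperHalfPlane.ext
  rw [UpperHalfPlane.specialLinearGroup_apply]
  show ((algebraMap ℝ ℝ (((-1 : Matrix.SpecialLinearGroup (Fin 2) ℝ) : Matrix (Fin 2) (Fin 2) ℝ) 0 0) : ℂ) * z + _) / _ = _
  simp

lemma dist_rot (θ : ℝ) (hθ : 0 ≤ Real.sin θ) (g : Matrix.SpecialLinearGroup (Fin 2) ℝ)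
    (hg : (g : Matrix (Fin 2) (Fin 2) ℝ) = !![Real.cos θ, Real.sin θ; -Real.sin θ, Real.cos θ])
    (r : ℝ) (hr : 0 < r) (p : UpperHalfPlane) (hp : (p : ℂ) = Real.exp r * Complex.I) :
    dist p (g • p) = 2 * Real.arsinh (Real.sinh r * Real.sin θ) := by
  set s := Real.exp r with hs_def
  set c := Real.cos θ with hc_def
  set t := Real.sin θ with ht_def
  have hs1 : 1 < s := by
    rw [hs_def, show (1:ℝ) = Real.exp 0 by simp]
    exact Real.exp_lt_exp.mpr hr
  have hs0 : 0 < s := lt_trans one_pos hs1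
  have hct : c ^ 2 + t ^ 2 = 1 := by rw [hc_def, ht_def]; exact Real.cos_sq_add_sin_sq θ
  have hs2 : 1 ≤ s ^ 2 := by nlinarith
  have hQ : 0 < c ^ 2 + s ^ 2 * t ^ 2 := by
    have h2 : t ^ 2 * 1 ≤ t ^ 2 * s ^ 2 := mul_le_mul_of_nonneg_left hs2 (sq_nonneg t)
    nlinarith
  set Q := c ^ 2 + s ^ 2 * t ^ 2 with hQ_def
  have hQne : Q ≠ 0 := ne_of_gt hQ
  have hnormSq : Complex.normSq ((c : ℂ) - s * t * Complex.I) = Q := by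
    simp [Complex.normSq_apply]
    ring
  have hden : ((c : ℂ) - s * t * Complex.I) ≠ 0 := by
    intro h
    rw [h, map_zero] at hnormSq
    exact hQne hnormSq.symm
  have h00 : g 0 0 = c := by rw [show g 0 0 = (g : Matrix (Fin 2) (Fin 2) ℝ) 0 0 from rfl, hg]; simp
  have h01 : g 0 1 = t := by rw [show g 0 1 = (g : Matrix (Fin 2) (Fin 2) ℝ) 0 1 from rfl, hg]; simp
  have h10 : g 1 0 = -t := by rw [show g 1 0 = (g : Matrix (Fin 2) (Fin 2) ℝ) 1 0 from rfl, hg]; simp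
  have h11 : g 1 1 = c := by rw [show g 1 1 = (g : Matrix (Fin 2) (Fin 2) ℝ) 1 1 from rfl, hg]; simp
  have hw : ((g • p : UpperHalfPlane) : ℂ) = ((t : ℂ) + c * s * Complex.I) / ((c : ℂ) - s * t * Complex.I) := by
    rw [UpperHalfPlane.specialLinearGroup_apply]
    show ((algebraMap ℝ ℝ (g 0 0) : ℂ) * p + (algebraMap ℝ ℝ (g 0 1) : ℂ)) / _ = _
    simp only [h00, h01, h10, h11, Algebra.algebraMap_self_apply, hp]
    push_cast
    ring_nf
  have himp : p.im = s := by rw [← UpperHalfPlane.coe_im, hp]; simp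
  have himw : (g • p : UpperHalfPlane).im = s / Q := by
    rw [← UpperHalfPlane.coe_im, hw, Complex.div_im, hnormSq]
    simp
    rw [div_sub_div_same, div_eq_div_iff hQne hQne]
    linear_combination (s * Q) * hct
  have hsubmul : ((p : ℂ) - (g • p : UpperHalfPlane)) * ((c : ℂ) - s * t * Complex.I)
      = ((t * (s ^ 2 - 1) : ℝ) : ℂ) := by
    rw [hw, hp, sub_mul, div_mul_cancel₀ _ hden]
    push_cast
    ring_nf
    rw [Complex.I_sq]
    ring
  have habsden : ‖((c : ℂ) - s * t * Complex.I)‖ = Real.sqrt Q := by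
    rw [Complex.norm_def, hnormSq]
  have hsQ : (0:ℝ) < Real.sqrt Q := Real.sqrt_pos.mpr hQ
  have habs : ‖((p : ℂ) - (g • p : UpperHalfPlane))‖ = t * (s ^ 2 - 1) / Real.sqrt Q := by
    have h1 := congrArg norm hsubmul
    rw [norm_mul, habsden, Complex.norm_real, Real.norm_eq_abs, _root_.abs_of_nonneg (by nlinarith)] at h1
    field_simp at h1 ⊢
    linarith [h1]
  rw [UpperHalfPlane.dist_eq]
  congr 1
  rw [Complex.dist_eq, habs, himp, himw]
  have hsq : Real.sqrt (s * (s / Q)) = s / Real.sqrt Q := by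
    rw [show s * (s / Q) = (s / Real.sqrt Q) ^ 2 by rw [div_pow, Real.sq_sqrt hQ.le]; ring]
    exact Real.sqrt_sq (by positivity)
  rw [hsq]
  have hsinh : Real.sinh r = (s ^ 2 - 1) / (2 * s) := by
    rw [Real.sinh_eq, Real.exp_neg, ← hs_def]
    field_simp
  rw [hsinh]
  field_simp

/-- A regular hyperbolic `n`-gon (`n ≥ 4`) inscribed in the circle of radius `r`
centered at `i`, wrapped around once: `x_n = x_0`, the tension of the chain equals
`(n−1)·d(x₀,x₂) − (n−2)·d(x₀,x₁)`, and it is at least `d(x₀,x₂)`. -/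
theorem regular_polygon_tension (n : ℕ) (hn : 4 ≤ n) (r : ℝ) (hr : 0 < r)
    (R : Matrix.SpecialLinearGroup (Fin 2) ℝ)
    (hR : (R : Matrix (Fin 2) (Fin 2) ℝ) =
      !![Real.cos (π / n), Real.sin (π / n); -Real.sin (π / n), Real.cos (π / n)])
    (p : UpperHalfPlane) (hp : (p : ℂ) = Real.exp r * Complex.I)
    (x : ℕ → UpperHalfPlane) (hx : ∀ k : ℕ, x k = R ^ k • p) :
    x n = x 0 ∧
      tension n x = ((n : ℝ) - 1) * dist (x 0) (x 2) - ((n : ℝ) - 2) * dist (x 0) (x 1) ∧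
      tension n x ≥ dist (x 0) (x 2) := by
  have hn4 : (4:ℝ) ≤ (n:ℝ) := by exact_mod_cast hn
  have hn0 : (0:ℝ) < (n:ℝ) := by linarith
  set θ := π / (n:ℝ) with hθ_def
  have hθpos : 0 < θ := div_pos Real.pi_pos hn0
  have hθ4 : θ ≤ π / 4 := by
    rw [hθ_def]
    gcongr
  have hsinθ : 0 ≤ Real.sin θ :=
    Real.sin_nonneg_of_nonneg_of_le_pi hθpos.le (by linarith [Real.pi_pos])
  have hsin2θ : 0 ≤ Real.sin (2 * θ) :=
    Real.sin_nonneg_of_nonneg_of_le_pi (by linarith) (by linarith [Real.pi_pos])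
  have h2coe : ((R ^ 2 : Matrix.SpecialLinearGroup (Fin 2) ℝ) : Matrix (Fin 2) (Fin 2) ℝ)
      = !![Real.cos (2 * θ), Real.sin (2 * θ); -Real.sin (2 * θ), Real.cos (2 * θ)] := by
    have h := rot_pow θ R hR 2
    norm_num at h
    exact h
  have hd1 : dist (x 0) (x 1) = 2 * Real.arsinh (Real.sinh r * Real.sin θ) := by
    rw [hx 0, hx 1, pow_zero, one_smul, pow_one]
    exact dist_rot θ hsinθ R hR r hr p hp
  have hd2 : dist (x 0) (x 2) = 2 * Real.arsinh (Real.sinh r * Real.sin (2 * θ)) := by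
    rw [hx 0, hx 2, pow_zero, one_smul]
    exact dist_rot (2 * θ) hsin2θ (R ^ 2) h2coe r hr p hp
  have hDd : dist (x 0) (x 1) ≤ dist (x 0) (x 2) := by
    rw [hd1, hd2]
    have hsin : Real.sin θ ≤ Real.sin (2 * θ) := by
      rw [Real.sin_two_mul]
      have hcos : (1:ℝ)/2 ≤ Real.cos θ := by
        rw [← Real.cos_pi_div_three]
        exact Real.cos_le_cos_of_nonneg_of_le_pi hθpos.le (by linarith [Real.pi_pos])
          (by linarith [Real.pi_pos])
      nlinarith
    have hsh : (0:ℝ) ≤ Real.sinh r := by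
      rw [show (0:ℝ) = Real.sinh 0 by simp]
      exact Real.sinh_le_sinh.mpr hr.le
    have := Real.arsinh_le_arsinh.mpr (mul_le_mul_of_nonneg_left hsin hsh)
    linarith
  have hRn : (R ^ n : Matrix.SpecialLinearGroup (Fin 2) ℝ) = -1 := by
    have h := rot_pow θ R hR n
    have hnθ : (n:ℝ) * θ = π := by rw [hθ_def]; field_simp
    apply Subtype.ext
    rw [h, hnθ, Real.cos_pi, Real.sin_pi]
    show _ = ((-1 : Matrix.SpecialLinearGroup (Fin 2) ℝ) : Matrix (Fin 2) (Fin 2) ℝ)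
    ext i j
    fin_cases i <;> fin_cases j <;> simp
  have hxn : x n = x 0 := by
    rw [hx n, hRn, neg_one_smul_H, hx 0, pow_zero, one_smul]
  have hA : ∀ j, dist (x j) (x (j + 2)) = dist (x 0) (x 2) := fun j => by
    rw [hx j, hx (j + 2), hx 0, hx 2, pow_zero, one_smul, pow_add, mul_smul, dist_smul]
  have hB : ∀ j, dist (x (j + 1)) (x (j + 2)) = dist (x 0) (x 1) := fun j => by
    have e2 : x (j + 2) = R ^ (j + 1) • (R • p) := by
      rw [hx (j + 2), show j + 2 = (j + 1) + 1 from rfl, pow_succ, mul_smul]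
    rw [hx (j + 1), e2, dist_smul, hx 0, hx 1, pow_zero, one_smul, pow_one]
  have hc1 : ((n - 1 : ℕ) : ℝ) = (n:ℝ) - 1 := by
    rw [Nat.cast_sub (by omega)]; norm_num
  have hc2 : ((n - 2 : ℕ) : ℝ) = (n:ℝ) - 2 := by
    rw [Nat.cast_sub (by omega)]; norm_num
  have htension : tension n x
      = ((n:ℝ) - 1) * dist (x 0) (x 2) - ((n:ℝ) - 2) * dist (x 0) (x 1) := by
    unfold tension
    rw [hxn, dist_self,
      Finset.sum_congr rfl (fun j _ => hA j), Finset.sum_congr rfl (fun j _ => hB j),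
      Finset.sum_const, Finset.sum_const, Finset.card_range, Finset.card_range,
      nsmul_eq_mul, nsmul_eq_mul, hc1, hc2]
    ring
  refine ⟨hxn, htension, ?_⟩
  rw [htension]
  have hmul : ((n:ℝ) - 2) * dist (x 0) (x 1) ≤ ((n:ℝ) - 2) * dist (x 0) (x 2) :=
    mul_le_mul_of_nonneg_left hDd (by linarith)
  linarith
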